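/- The module M_{Y,d} of norm-limits of finite-propagation operators from ℓ²(X) to ℓ²(Y), equipped with the right action T·a = Ta for a ∈ C*_u(X) and inner product ⟨S,T⟩ = S*T, is a Hilbert C*-module over C*_u(X). -/

import Mathlib

noncomputable section

/-- `ℓ²(X)`. -/
abbrev H (X : Type) := lp (fun _ : X => ℂ) 2

/-- The delta function `δ_x`. -/
def delta {X : Type} (x : X) : H X :=
  letI := Classical.decEq X
  lp.single 2 x 1

/-- Matrix entry `⟨δ_y, T δ_x⟩` of an operator. -/
def entry {X Y : Type} (T : H X →L[ℂ] H Y) (y : Y) (x : X) : ℂ := (T (delta x)) y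

/-- `d` is a metric on `Z`. -/
structure IsMetric {Z : Type} (d : Z → Z → ℝ) : Prop where
  self : ∀ p, d p p = 0
  eq_of : ∀ p q, d p q = 0 → p = q
  symm : ∀ p q, d p q = d q p
  triangle : ∀ p q r, d p r ≤ d p q + d q r

open scoped InnerProductSpace

lemma delta_inner {X : Type} (x : X) (f : H X) : ⟪delta x, f⟫_ℂ = f x := by
  classical
  rw [delta, lp.inner_single_left]
  simp [RCLike.inner_apply]

lemma apply_eq_tsum {X Y : Type} (T : H X →L[ℂ] H Y) (v : H X) (y : Y) :
    (T v) y = ∑' x, entry T y x * v x := by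
  have h1 : (T v) y = ⟪ContinuousLinearMap.adjoint T (delta y), v⟫_ℂ := by
    rw [ContinuousLinearMap.adjoint_inner_left, delta_inner]
  rw [h1, lp.inner_eq_tsum]
  congr 1; ext x
  have h2 : (ContinuousLinearMap.adjoint T (delta y)) x
      = ⟪T (delta x), delta y⟫_ℂ := by
    rw [← delta_inner x, ContinuousLinearMap.adjoint_inner_right]
  rw [RCLike.inner_apply, h2, ← inner_conj_symm]
  simp only [starRingEnd_apply, star_star]
  rw [delta_inner]
  exact mul_comm _ _

lemma entry_adjoint {X Y : Type} (S : H X →L[ℂ] H Y) (x : X) (y : Y) :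
    entry (ContinuousLinearMap.adjoint S) x y = (starRingEnd ℂ) (entry S y x) := by
  have : entry (ContinuousLinearMap.adjoint S) x y
      = ⟪delta x, ContinuousLinearMap.adjoint S (delta y)⟫_ℂ := (delta_inner _ _).symm
  rw [this, ContinuousLinearMap.adjoint_inner_right, ← inner_conj_symm, delta_inner]
  rfl

set_option maxHeartbeats 1000000 in
set_option synthInstance.maxHeartbeats 200000 in
open ContinuousLinearMap in
/-- `M_{Y,d}`, the norm closure of the finite-propagation operators
`ℓ²(X) → ℓ²(Y)`, with right action `T·a = Ta` by elements `a` of the uniform Roe algebra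
`C*_u(X)` and inner product `⟨S,T⟩ = S*T`, is a Hilbert C*-module over `C*_u(X)`. -/
theorem stmt_8 {X Y : Type} [MetricSpace X]
    (d : X ⊕ Y → X ⊕ Y → ℝ) (hd : IsMetric d)
    (hext : ∀ x x' : X, d (Sum.inl x) (Sum.inl x') = dist x x')
    (M : Set (H X →L[ℂ] H Y))
    (hM : M = closure {T | ∃ L : ℝ, ∀ (x : X) (y : Y),
        L ≤ d (Sum.inl x) (Sum.inr y) → entry T y x = 0})
    (A : Set (H X →L[ℂ] H X))
    (hA : A = closure {R | ∃ L : ℝ, ∀ x x' : X, L ≤ dist x x' → entry R x' x = 0}) :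
    -- M is a right A-module
    (∀ T ∈ M, ∀ a ∈ A, T.comp a ∈ M) ∧
    -- the inner product takes values in A
    (∀ S ∈ M, ∀ T ∈ M, (adjoint S).comp T ∈ A) ∧
    -- A-linearity in the second variable
    (∀ (S T : H X →L[ℂ] H Y) (a : H X →L[ℂ] H X),
      (adjoint S).comp (T.comp a) = ((adjoint S).comp T).comp a) ∧
    -- hermitian symmetry
    (∀ S T : H X →L[ℂ] H Y, star ((adjoint S).comp T) = (adjoint T).comp S) ∧
    -- positivity
    (∀ T : H X →L[ℂ] H Y, ((adjoint T).comp T).IsPositive) ∧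
    -- definiteness
    (∀ T : H X →L[ℂ] H Y, (adjoint T).comp T = 0 → T = 0) ∧
    -- compatibility of norms
    (∀ T : H X →L[ℂ] H Y, ‖T‖ ^ 2 = ‖(adjoint T).comp T‖) ∧
    -- completeness
    IsClosed M := by
  subst hM hA
  set M₀ : Set (H X →L[ℂ] H Y) := {T | ∃ L : ℝ, ∀ (x : X) (y : Y),
      L ≤ d (Sum.inl x) (Sum.inr y) → entry T y x = 0} with hM₀
  set A₀ : Set (H X →L[ℂ] H X) := {R | ∃ L : ℝ, ∀ x x' : X,
      L ≤ dist x x' → entry R x' x = 0} with hA₀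
  -- matrix entries of compositions
  have hcomp1 : ∀ (T₀ : H X →L[ℂ] H Y) (a₀ : H X →L[ℂ] H X) (y : Y) (x : X),
      entry (T₀.comp a₀) y x = ∑' x', entry T₀ y x' * entry a₀ x' x :=
    fun T₀ a₀ y x => apply_eq_tsum T₀ (a₀ (delta x)) y
  have hcomp2 : ∀ (S₀ : H X →L[ℂ] H Y) (T₀ : H X →L[ℂ] H Y) (x' x : X),
      entry ((adjoint S₀).comp T₀) x' x
        = ∑' y, entry (adjoint S₀) x' y * entry T₀ y x :=
    fun S₀ T₀ x' x => apply_eq_tsum (adjoint S₀) (T₀ (delta x)) x'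
  -- finite-propagation sets are closed under the operations
  have key1 : ∀ T₀ ∈ M₀, ∀ a₀ ∈ A₀, T₀.comp a₀ ∈ M₀ := by
    rintro T₀ ⟨L1, h1⟩ a₀ ⟨L2, h2⟩
    refine ⟨L1 + L2, fun x y hxy => ?_⟩
    rw [hcomp1]
    have hz : ∀ x', entry T₀ y x' * entry a₀ x' x = 0 := by
      intro x'
      by_cases hc : L2 ≤ dist x x'
      · rw [h2 x x' hc, mul_zero]
      · push_neg at hc
        have htri := hd.triangle (Sum.inl x) (Sum.inl x') (Sum.inr y)
        rw [hext] at htri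
        have : L1 ≤ d (Sum.inl x') (Sum.inr y) := by linarith
        rw [h1 x' y this, zero_mul]
    rw [tsum_congr hz, tsum_zero]
  have key2 : ∀ S₀ ∈ M₀, ∀ T₀ ∈ M₀, (adjoint S₀).comp T₀ ∈ A₀ := by
    rintro S₀ ⟨L1, h1⟩ T₀ ⟨L2, h2⟩
    refine ⟨L1 + L2, fun x x' hxx => ?_⟩
    rw [hcomp2]
    have hz : ∀ y, entry (adjoint S₀) x' y * entry T₀ y x = 0 := by
      intro y
      by_cases hc : L2 ≤ d (Sum.inl x) (Sum.inr y)
      · rw [h2 x y hc, mul_zero]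
      · push_neg at hc
        have htri := hd.triangle (Sum.inl x') (Sum.inr y) (Sum.inl x)
        have hsym := hd.symm (Sum.inr y) (Sum.inl x)
        rw [hext, dist_comm] at htri
        have hL1 : L1 ≤ d (Sum.inl x') (Sum.inr y) := by linarith
        rw [entry_adjoint, h1 x' y hL1, map_zero, zero_mul]
    rw [tsum_congr hz, tsum_zero]
  -- continuity of composition
  have hcont : Continuous fun p : (H X →L[ℂ] H Y) × (H X →L[ℂ] H X) => p.1.comp p.2 :=
    isBoundedBilinearMap_comp.continuous
  refine ⟨?_, ?_, ?_, ?_, ?_, ?_, ?_, isClosed_closure⟩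
  · -- right module structure
    intro T hT a ha
    have hmem : (T, a) ∈ closure (M₀ ×ˢ A₀) := by
      rw [closure_prod_eq]; exact ⟨hT, ha⟩
    have hstep := image_closure_subset_closure_image hcont
      (Set.mem_image_of_mem _ hmem)
    refine closure_mono ?_ hstep
    rintro _ ⟨⟨T₀, a₀⟩, ⟨hT₀, ha₀⟩, rfl⟩
    exact key1 _ hT₀ _ ha₀
  · -- inner products land in A
    intro S hS T hT
    have hadjc : Continuous fun S : H X →L[ℂ] H Y => adjoint S :=
      (ContinuousLinearMap.adjoint (E := H X) (F := H Y) (𝕜 := ℂ)).continuous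
    have hgc : Continuous fun p : (H X →L[ℂ] H Y) × (H X →L[ℂ] H Y) =>
        (adjoint p.1).comp p.2 :=
      (hadjc.comp continuous_fst).clm_comp continuous_snd
    have hmem : (S, T) ∈ closure (M₀ ×ˢ M₀) := by
      rw [closure_prod_eq]; exact ⟨hS, hT⟩
    have hstep := image_closure_subset_closure_image hgc
      (Set.mem_image_of_mem _ hmem)
    refine closure_mono ?_ hstep
    rintro _ ⟨⟨S₀, T₀⟩, ⟨hS₀, hT₀⟩, rfl⟩
    exact key2 _ hS₀ _ hT₀
  · -- A-linearity
    intro S T a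
    rfl
  · -- hermitian symmetry
    intro S T
    rw [star_eq_adjoint, adjoint_comp, adjoint_adjoint]
  · -- positivity
    intro T
    exact isPositive_adjoint_comp_self T
  · -- definiteness
    intro T h
    have h2 := norm_adjoint_comp_self T
    rw [h, norm_zero] at h2
    exact norm_eq_zero.mp (mul_self_eq_zero.mp h2.symm)
  · -- C*-identity
    intro T
    rw [pow_two]
    exact (norm_adjoint_comp_self T).symm
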